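/- If L ⊆ Σ^ω is ω-regular and ~ is its Arnold congruence, then ~ has finite index and is an ω-congruence for L: it is compatible with concatenation and recognizes L in the sense that u_i ~ u_i' for all i implies u_1 u_2 ⋯ ∈ L ⟺ u_1' u_2' ⋯ ∈ L. -/

import Mathlib

open Filter

variable {A : Type*}

/-- The interval coded by `p` occupies positions `p.1, …, p.1 + p.2 - 1` (length `p.2 > 0`). -/
def IntervalLt (p q : ℕ × ℕ) : Prop := p.1 + p.2 ≤ q.1

def IntervalDisj (p q : ℕ × ℕ) : Prop := p.1 + p.2 ≤ q.1 ∨ q.1 + q.2 ≤ p.1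

def prefixList (u : ℕ → List A) (m : ℕ) : List A := (List.range m).flatMap u

/-- Prepending a finite word to an ω-word. -/
def prepend (w : List A) (x : ℕ → A) : ℕ → A := fun n =>
  if h : n < w.length then w.get ⟨n, h⟩ else x (n - w.length)

open Classical in
/-- The infinite concatenation `u 0 · u 1 · u 2 ⋯` of a sequence of finite words, as an
ω-word; meaningful when infinitely many of the `u i` are nonempty. -/
noncomputable def omegaConcat [Inhabited A] (u : ℕ → List A) : ℕ → A := fun n =>
  if h : ∃ m, n < (prefixList u m).length
  then (prefixList u (Nat.find h)).getD n default
  else default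

/-- The ω-power `v^ω` of a finite word; meaningful when `v ≠ []`. -/
noncomputable def omegaPow [Inhabited A] (v : List A) : ℕ → A := fun n =>
  v.getD (n % v.length) default

/-- Infinitely many of the words `u i` are nonempty. -/
def InfOftenNonempty (u : ℕ → List A) : Prop := ∀ n, ∃ m, n ≤ m ∧ u m ≠ []

/-- A relation on finite words has finite index (finitely many classes). -/
def FiniteIndex (r : List A → List A → Prop) : Prop :=
  (Set.range fun w => {v | r w v}).Finite

/-- Compatibility with concatenation. -/
def ConcatCongr (r : List A → List A → Prop) : Prop :=
  ∀ u₁ u₁' u₂ u₂' : List A, r u₁ u₁' → r u₂ u₂' → r (u₁ ++ u₂) (u₁' ++ u₂')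

/-- The relation `r` recognizes `L`: relating the blocks of two infinite concatenations
pointwise preserves membership in `L`. -/
def Recognizes [Inhabited A] (r : List A → List A → Prop) (L : Set (ℕ → A)) : Prop :=
  ∀ u u' : ℕ → List A, InfOftenNonempty u → InfOftenNonempty u' →
    (∀ i, r (u i) (u' i)) → (omegaConcat u ∈ L ↔ omegaConcat u' ∈ L)

/-- Nondeterministic Büchi automaton. -/
structure BuchiAutomaton (A : Type*) where
  Q : Type
  finQ : Finite Q
  init : Set Q
  step : Q → A → Set Q
  acc : Set Q

def BuchiAutomaton.Accepts (M : BuchiAutomaton A) (x : ℕ → A) : Prop :=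
  ∃ ρ : ℕ → M.Q, ρ 0 ∈ M.init ∧ (∀ n, ρ (n + 1) ∈ M.step (ρ n) (x n)) ∧
    ∀ n, ∃ m, n ≤ m ∧ ρ m ∈ M.acc

def OmegaRegular (L : Set (ℕ → A)) : Prop :=
  ∃ M : BuchiAutomaton A, ∀ x, x ∈ L ↔ M.Accepts x

/-- ω-words over `{a, b}` (with `a = true`, `b = false`) of the form `a^{k₁} b a^{k₂} b ⋯`
whose blocks of `a`'s have unbounded size. -/
def Uset : Set (ℕ → Bool) :=
  {x | (∀ n, ∃ m, n ≤ m ∧ x m = false) ∧ ∀ n, ∃ k, ∀ i < n, x (k + i) = true}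
/-- The Arnold congruence of `L`. -/
def ArnoldEq [Inhabited A] (L : Set (ℕ → A)) (u u' : List A) : Prop :=
  (∀ (w : List A) (x : ℕ → A), prepend w (prepend u x) ∈ L ↔ prepend w (prepend u' x) ∈ L) ∧
  ∀ w v : List A, v ≠ [] →
    (prepend w (omegaPow (u ++ v)) ∈ L ↔ prepend w (omegaPow (u' ++ v)) ∈ L)

section API
variable [Inhabited A]

@[simp] lemma prefixList_zero (u : ℕ → List A) : prefixList u 0 = [] := rfl

lemma prefixList_succ (u : ℕ → List A) (m : ℕ) :
    prefixList u (m+1) = prefixList u m ++ u m := by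
  simp [prefixList, List.range_succ]

lemma prefixList_len_mono (u : ℕ → List A) : Monotone fun m => (prefixList u m).length := by
  apply monotone_nat_of_le_succ
  intro m; rw [prefixList_succ]; simp

lemma prefixList_add (u : ℕ → List A) (a c : ℕ) :
    prefixList u (a + c) = prefixList u a ++ prefixList (fun i => u (a + i)) c := by
  induction c with
  | zero => simp
  | succ c ih => rw [← Nat.add_assoc, prefixList_succ, ih, prefixList_succ, List.append_assoc]

lemma getD_prefixList_mono (u : ℕ → List A) {k l n : ℕ} (hkl : k ≤ l)
    (hn : n < (prefixList u k).length) :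
    (prefixList u l).getD n default = (prefixList u k).getD n default := by
  obtain ⟨c, rfl⟩ := Nat.exists_eq_add_of_le hkl
  rw [prefixList_add, List.getD_append _ _ _ _ hn]

lemma omegaConcat_getD (u : ℕ → List A) {n m : ℕ} (h : n < (prefixList u m).length) :
    omegaConcat u n = (prefixList u m).getD n default := by
  have hex : ∃ m, n < (prefixList u m).length := ⟨m, h⟩
  rw [omegaConcat, dif_pos hex]
  have hfind := Nat.find_spec hex
  rcases le_total (Nat.find hex) m with hle | hle
  · rw [getD_prefixList_mono u hle hfind]
  · rw [getD_prefixList_mono u hle h]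

lemma unbounded_of_ion {u : ℕ → List A} (hu : InfOftenNonempty u) (n : ℕ) :
    ∃ m, n < (prefixList u m).length := by
  induction n with
  | zero =>
    obtain ⟨m, -, hm⟩ := hu 0
    exact ⟨m + 1, by rw [prefixList_succ]; simp [List.length_pos_iff.mpr hm]⟩
  | succ n ih =>
    obtain ⟨m, hm⟩ := ih
    obtain ⟨k, hk, hknil⟩ := hu m
    refine ⟨k + 1, ?_⟩
    have h1 : (prefixList u m).length ≤ (prefixList u k).length := prefixList_len_mono u hk
    rw [prefixList_succ]
    simp only [List.length_append]
    have := List.length_pos_iff.mpr hknil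
    omega

/-- every position lies in a unique "block". -/
lemma exists_block {u : ℕ → List A} (hu : InfOftenNonempty u) (n : ℕ) :
    ∃ i, (prefixList u i).length ≤ n ∧ n < (prefixList u (i+1)).length := by
  obtain ⟨m, hm⟩ := unbounded_of_ion hu n
  have hex : ∃ m, n < (prefixList u m).length := ⟨m, hm⟩
  have hk := Nat.find_spec hex
  have hpos : 0 < Nat.find hex := by
    rcases Nat.eq_zero_or_pos (Nat.find hex) with h0 | h; · rw [h0] at hk; simp at hk
    · exact h
  refine ⟨Nat.find hex - 1, ?_, ?_⟩
  · have := Nat.find_min hex (m := Nat.find hex - 1) (by omega)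
    omega
  · have : Nat.find hex - 1 + 1 = Nat.find hex := by omega
    rw [this]; exact hk

lemma omegaConcat_eval (u : ℕ → List A) {i n : ℕ}
    (h1 : (prefixList u i).length ≤ n) (h2 : n < (prefixList u (i+1)).length) :
    omegaConcat u n = (u i).getD (n - (prefixList u i).length) default := by
  rw [omegaConcat_getD u h2, prefixList_succ,
    List.getD_append_right _ _ _ _ h1]

lemma block_unique {u : ℕ → List A} {i j n : ℕ}
    (h1 : (prefixList u i).length ≤ n) (h2 : n < (prefixList u (i+1)).length)
    (h3 : (prefixList u j).length ≤ n) (h4 : n < (prefixList u (j+1)).length) : i = j := by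
  by_contra hne
  rcases Nat.lt_or_ge i j with h | h
  · have : (prefixList u (i+1)).length ≤ (prefixList u j).length := prefixList_len_mono u h
    omega
  · have hj : j < i := by omega
    have : (prefixList u (j+1)).length ≤ (prefixList u i).length := prefixList_len_mono u hj
    omega

lemma omegaConcat_congr {u v : ℕ → List A}
    (h : ∀ n, ∃ k l, n ≤ (prefixList u k).length ∧ prefixList u k = prefixList v l) :
    omegaConcat u = omegaConcat v := by
  funext n
  obtain ⟨k, l, hn, heq⟩ := h (n+1)
  rw [omegaConcat_getD u (m := k) (by omega), heq,
    omegaConcat_getD v (m := l) (by rw [← heq]; omega)]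

set_option linter.unusedSectionVars false

lemma prepend_eval_lt (w : List A) (x : ℕ → A) {n : ℕ} (h : n < w.length) :
    prepend w x n = w.getD n default := by
  rw [prepend, dif_pos h, List.getD_eq_getElem _ _ h]; rfl

lemma prepend_eval_ge (w : List A) (x : ℕ → A) {n : ℕ} (h : w.length ≤ n) :
    prepend w x n = x (n - w.length) := by
  rw [prepend, dif_neg (by omega)]

@[simp] lemma prepend_nil (x : ℕ → A) : prepend [] x = x := by
  funext n; rw [prepend_eval_ge [] x (by simp)]; simp

lemma prepend_append (w₁ w₂ : List A) (x : ℕ → A) :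
    prepend (w₁ ++ w₂) x = prepend w₁ (prepend w₂ x) := by
  funext n
  rcases Nat.lt_or_ge n w₁.length with h | h
  · rw [prepend_eval_lt _ _ (by simp; omega), prepend_eval_lt _ _ h,
      List.getD_append _ _ _ _ h]
  · rw [prepend_eval_ge w₁ _ h]
    rcases Nat.lt_or_ge n (w₁.length + w₂.length) with h2 | h2
    · rw [prepend_eval_lt _ _ (by simp; omega), prepend_eval_lt _ _ (by omega),
        List.getD_append_right _ _ _ _ h]
    · rw [prepend_eval_ge _ _ (by simp; omega), prepend_eval_ge _ _ (by omega)]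
      congr 1; simp; omega

lemma omegaPow_rotate (s t : List A) :
    omegaPow (s ++ t) = prepend s (omegaPow (t ++ s)) := by
  have hlen : (t ++ s).length = (s ++ t).length := by simp; omega
  funext n
  rcases Nat.eq_zero_or_pos (s ++ t).length with h0 | hpos
  · have hs : s = [] := by simp at h0; simp [h0.1]
    have ht : t = [] := by simp at h0; simp [h0.2]
    subst hs; subst ht; simp [omegaPow]
  rcases Nat.lt_or_ge n s.length with h | h
  · rw [prepend_eval_lt _ _ h, omegaPow,
      Nat.mod_eq_of_lt (lt_of_lt_of_le h (by simp)), List.getD_append _ _ _ _ h]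
  · rw [prepend_eval_ge _ _ h, omegaPow, omegaPow, hlen]
    set N := (s ++ t).length with hN
    have hNst : N = s.length + t.length := by simp [hN]
    set m := n - s.length with hm
    have hn : n = s.length + m := by omega
    have e1 : n % N = (s.length + m % N) % N := by
      rw [hn, Nat.add_mod_mod]
    have hr : m % N < N := Nat.mod_lt _ hpos
    set r := m % N with hrdef
    rcases Nat.lt_or_ge r t.length with hrt | hrt
    · have : (s.length + r) % N = s.length + r := Nat.mod_eq_of_lt (by omega)
      rw [e1, this, List.getD_append_right _ _ _ _ (by omega),
        List.getD_append _ _ _ _ hrt]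
      congr 1; omega
    · have : (s.length + r) % N = r - t.length := by
        have h2N : s.length + r < N + N := by omega
        have hge : N ≤ s.length + r := by omega
        rw [Nat.mod_eq_sub_mod hge, Nat.mod_eq_of_lt (by omega)]
        omega
      rw [e1, this, List.getD_append _ _ _ _ (by omega),
        List.getD_append_right _ _ _ _ hrt]

lemma omegaPow_sq (z : List A) : omegaPow (z ++ z) = omegaPow z := by
  funext n
  rcases Nat.eq_zero_or_pos z.length with h0 | hpos
  · have : z = [] := by simpa using h0
    subst this; simp
  rw [omegaPow, omegaPow]
  have hlen : (z ++ z).length = z.length + z.length := by simp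
  set r := n % (z ++ z).length with hr
  have hrlt : r < z.length + z.length := by
    rw [hr, ← hlen]; exact Nat.mod_lt _ (by omega)
  have hmod : r % z.length = n % z.length := by
    rw [hr, hlen, Nat.mod_mod_of_dvd n ⟨2, by ring⟩]
  rcases Nat.lt_or_ge r z.length with h | h
  · rw [List.getD_append _ _ _ _ h, ← hmod, Nat.mod_eq_of_lt h]
  · rw [List.getD_append_right _ _ _ _ h, ← hmod, Nat.mod_eq_sub_mod h,
      Nat.mod_eq_of_lt (by omega)]

lemma prepend_omegaPow_self (z : List A) : prepend z (omegaPow z) = omegaPow z := by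
  have := omegaPow_rotate z []
  simpa using this.symm

/-- sequence with a head block. -/
def seqCons (w : List A) (v : ℕ → List A) : ℕ → List A := fun k =>
  match k with
  | 0 => w
  | k+1 => v k

lemma prefixList_seqCons (w : List A) (v : ℕ → List A) (m : ℕ) :
    prefixList (seqCons w v) (m+1) = w ++ prefixList v m := by
  induction m with
  | zero => simp [prefixList_succ, seqCons]
  | succ m ih => rw [prefixList_succ, ih, prefixList_succ, List.append_assoc]; rfl

lemma omegaConcat_seqCons (w : List A) {v : ℕ → List A} (hv : InfOftenNonempty v) :
    omegaConcat (seqCons w v) = prepend w (omegaConcat v) := by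
  funext n
  rcases Nat.lt_or_ge n w.length with h | h
  · rw [prepend_eval_lt _ _ h,
      omegaConcat_getD _ (m := 1) (by rw [prefixList_seqCons]; simp; omega),
      prefixList_seqCons]
    simp [List.getD_append _ _ _ _ h]
  · obtain ⟨m, hm⟩ := unbounded_of_ion hv (n - w.length)
    rw [prepend_eval_ge _ _ h,
      omegaConcat_getD _ (m := m+1) (by rw [prefixList_seqCons]; simp; omega),
      prefixList_seqCons, List.getD_append_right _ _ _ _ h,
      omegaConcat_getD v hm]

lemma omegaConcat_singles (x : ℕ → A) : omegaConcat (fun k => [x k]) = x := by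
  funext n
  have hlen : ∀ m, prefixList (fun k => ([x k] : List A)) m = (List.range m).map x := by
    intro m; rw [prefixList]; induction m with
    | zero => simp
    | succ m ih => simp [List.range_succ, ih]
  rw [omegaConcat_getD _ (m := n+1) (by rw [hlen]; simp), hlen,
    List.getD_eq_getElem _ _ (by simp)]
  simp

lemma ion_singles (x : ℕ → A) : InfOftenNonempty (fun k => [x k]) :=
  fun n => ⟨n, le_refl n, by simp⟩

lemma ion_seqCons (w : List A) {v : ℕ → List A} (hv : InfOftenNonempty v) :
    InfOftenNonempty (seqCons w v) := by
  intro n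
  obtain ⟨m, hm, hne⟩ := hv n
  exact ⟨m + 1, by omega, hne⟩

lemma prefixList_const (z : List A) (m : ℕ) :
    (prefixList (fun _ => z) m).length = m * z.length := by
  induction m with
  | zero => simp
  | succ m ih => rw [prefixList_succ]; simp [ih, Nat.succ_mul]

lemma prefixList_const_getD (z : List A) {m n : ℕ}
    (h : n < (prefixList (fun _ => z) m).length) :
    (prefixList (fun _ => z) m).getD n default = z.getD (n % z.length) default := by
  induction m with
  | zero => simp at h
  | succ m ih =>
    rw [prefixList_succ] at h ⊢
    simp only [List.length_append] at h
    rcases Nat.lt_or_ge n (prefixList (fun _ => z) m).length with h2 | h2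
    · rw [List.getD_append _ _ _ _ h2, ih h2]
    · rw [List.getD_append_right _ _ _ _ h2, prefixList_const]
      congr 1
      rw [prefixList_const] at h2 h
      have hzpos : 0 < z.length := by omega
      have hlt : n - m * z.length < z.length := by omega
      conv_rhs => rw [show n = (n - m * z.length) + m * z.length by omega]
      rw [Nat.add_mul_mod_self_right, Nat.mod_eq_of_lt hlt]

lemma omegaPow_eq_omegaConcat_const {z : List A} (hz : z ≠ []) :
    omegaPow z = omegaConcat (fun _ => z) := by
  have hzpos : 0 < z.length := List.length_pos_iff.mpr hz
  funext n
  have hlen : n < (prefixList (fun _ => z) (n+1)).length := by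
    rw [prefixList_const]; nlinarith
  rw [omegaConcat_getD _ (m := n+1) hlen, prefixList_const_getD z hlen, omegaPow]

lemma ion_const {z : List A} (hz : z ≠ []) : InfOftenNonempty (fun _ => z) :=
  fun n => ⟨n, le_refl n, hz⟩

end API

section Automaton
variable [Inhabited A]

def Reaches (M : BuchiAutomaton A) : M.Q → List A → M.Q → Prop
  | q, [], q' => q = q'
  | q, a :: w, q' => ∃ p, p ∈ M.step q a ∧ Reaches M p w q'

/-- reaches visiting an accepting state (endpoints allowed). -/
def ReachesA (M : BuchiAutomaton A) (q : M.Q) (w : List A) (q' : M.Q) : Prop :=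
  ∃ w₁ w₂ p, w = w₁ ++ w₂ ∧ p ∈ M.acc ∧ Reaches M q w₁ p ∧ Reaches M p w₂ q'

/-- the transition profile of a word. -/
def Profile (M : BuchiAutomaton A) (w : List A) : M.Q → M.Q → Prop × Prop := fun q q' =>
  (Reaches M q w q', ReachesA M q w q')

lemma Reaches.append {M : BuchiAutomaton A} {q p q' : M.Q} {w₁ w₂ : List A}
    (h1 : Reaches M q w₁ p) (h2 : Reaches M p w₂ q') : Reaches M q (w₁ ++ w₂) q' := by
  induction w₁ generalizing q with
  | nil => have hq : q = p := h1; subst hq; exact h2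
  | cons a t ih =>
    obtain ⟨r, hr, hrest⟩ := h1
    exact ⟨r, hr, ih hrest⟩

lemma Reaches.split {M : BuchiAutomaton A} {q q' : M.Q} {w₁ w₂ : List A}
    (h : Reaches M q (w₁ ++ w₂) q') : ∃ p, Reaches M q w₁ p ∧ Reaches M p w₂ q' := by
  induction w₁ generalizing q with
  | nil => exact ⟨q, rfl, h⟩
  | cons a t ih =>
    obtain ⟨r, hr, hrest⟩ := h
    obtain ⟨p, hp1, hp2⟩ := ih hrest
    exact ⟨p, ⟨r, hr, hp1⟩, hp2⟩

lemma Profile.reaches_iff {M : BuchiAutomaton A} {u u' : List A}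
    (h : Profile M u = Profile M u') {q q' : M.Q} :
    Reaches M q u q' ↔ Reaches M q u' q' :=
  Iff.of_eq (congrArg Prod.fst (congrFun (congrFun h q) q'))

lemma Profile.reachesA_iff {M : BuchiAutomaton A} {u u' : List A}
    (h : Profile M u = Profile M u') {q q' : M.Q} :
    ReachesA M q u q' ↔ ReachesA M q u' q' :=
  Iff.of_eq (congrArg Prod.snd (congrFun (congrFun h q) q'))

/-- profiles compose. -/
lemma profile_append {M : BuchiAutomaton A} {u u' v v' : List A}
    (hu : Profile M u = Profile M u') (hv : Profile M v = Profile M v') :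
    Profile M (u ++ v) = Profile M (u' ++ v') := by
  have key : ∀ (a b c d : List A), Profile M a = Profile M b → Profile M c = Profile M d →
      ∀ (q q' : M.Q),
      (Reaches M q (a ++ c) q' → Reaches M q (b ++ d) q') ∧
      (ReachesA M q (a ++ c) q' → ReachesA M q (b ++ d) q') := by
    intro a b c d hab hcd q q'
    constructor
    · intro h
      obtain ⟨p, h1, h2⟩ := h.split
      exact ((Profile.reaches_iff hab).mp h1).append ((Profile.reaches_iff hcd).mp h2)
    · rintro ⟨w₁, w₂, p, hsplit, hacc, h1, h2⟩
      rcases List.append_eq_append_iff.mp hsplit.symm with ⟨l, hl1, hl2⟩ | ⟨l, hl1, hl2⟩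
      · subst hl1; subst hl2
        obtain ⟨r, hr1, hr2⟩ := h2.split
        have haA : ReachesA M q (w₁ ++ l) r := ⟨w₁, l, p, rfl, hacc, h1, hr1⟩
        obtain ⟨b₁, b₂, p', hb, hacc', hb1, hb2⟩ := (Profile.reachesA_iff hab).mp haA
        exact ⟨b₁, b₂ ++ d, p', by rw [hb, List.append_assoc], hacc', hb1,
          hb2.append ((Profile.reaches_iff hcd).mp hr2)⟩
      · subst hl1; subst hl2
        obtain ⟨r, hr1, hr2⟩ := h1.split
        have hcA : ReachesA M r (l ++ w₂) q' := ⟨l, w₂, p, rfl, hacc, hr2, h2⟩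
        obtain ⟨d₁, d₂, p', hd, hacc', hd1, hd2⟩ := (Profile.reachesA_iff hcd).mp hcA
        exact ⟨b ++ d₁, d₂, p', by rw [hd, List.append_assoc], hacc',
          ((Profile.reaches_iff hab).mp hr1).append hd1, hd2⟩
  funext q q'
  have h1 := key u u' v v' hu hv q q'
  have h2 := key u' u v' v hu.symm hv.symm q q'
  rw [Profile, Profile]
  exact Prod.ext (propext ⟨h1.1, h2.1⟩) (propext ⟨h1.2, h2.2⟩)

end Automaton
section RunLemmas
variable [Inhabited A]

lemma reaches_of_run {M : BuchiAutomaton A} (ρ : ℕ → M.Q) (w : List A) (s : ℕ)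
    (h : ∀ j, j < w.length → ρ (s + j + 1) ∈ M.step (ρ (s + j)) (w.getD j default)) :
    Reaches M (ρ s) w (ρ (s + w.length)) := by
  induction w generalizing s with
  | nil => exact rfl
  | cons a t ih =>
    refine ⟨ρ (s+1), ?_, ?_⟩
    · have := h 0 (by simp)
      simpa using this
    · have hrec := ih (s+1) (fun j hj => by
        have h' := h (j+1) (by simp only [List.length_cons]; omega)
        have e1 : s + (j+1) + 1 = s + 1 + j + 1 := by omega
        have e2 : s + (j+1) = s + 1 + j := by omega
        rw [e1, e2] at h'
        simpa using h')
      have e : s + (a :: t).length = s + 1 + t.length := by simp; omega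
      rw [e]
      exact hrec

lemma run_of_reaches {M : BuchiAutomaton A} {q q' : M.Q} {w : List A}
    (h : Reaches M q w q') :
    ∃ σ : ℕ → M.Q, σ 0 = q ∧ σ w.length = q' ∧
      ∀ j, j < w.length → σ (j+1) ∈ M.step (σ j) (w.getD j default) := by
  induction w generalizing q with
  | nil =>
    have hq : q = q' := h
    exact ⟨fun _ => q, rfl, hq ▸ rfl, fun j hj => by simp at hj⟩
  | cons a t ih =>
    obtain ⟨p, hp, hrest⟩ := h
    obtain ⟨σ', h0, hend, hstep⟩ := ih hrest
    refine ⟨fun n => match n with | 0 => q | n+1 => σ' n, rfl, hend, ?_⟩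
    intro j hj
    match j with
    | 0 => simpa [h0] using hp
    | j+1 =>
      have := hstep j (by simp at hj; omega)
      simpa using this

lemma run_of_reachesA {M : BuchiAutomaton A} {q q' : M.Q} {w : List A}
    (h : ReachesA M q w q') :
    ∃ σ : ℕ → M.Q, σ 0 = q ∧ σ w.length = q' ∧
      (∀ j, j < w.length → σ (j+1) ∈ M.step (σ j) (w.getD j default)) ∧
      ∃ j, j ≤ w.length ∧ σ j ∈ M.acc := by
  obtain ⟨w₁, w₂, p, rfl, hacc, h1, h2⟩ := h
  obtain ⟨σ₁, h10, h1e, h1s⟩ := run_of_reaches h1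
  obtain ⟨σ₂, h20, h2e, h2s⟩ := run_of_reaches h2
  refine ⟨fun n => if n < w₁.length then σ₁ n else σ₂ (n - w₁.length), ?_, ?_, ?_, ?_⟩
  · by_cases h0 : 0 < w₁.length
    · simpa [h0] using h10
    · have hw1 : w₁ = [] := List.length_eq_zero_iff.mp (by omega)
      subst hw1
      have hqp : q = p := h1
      simpa [h20] using hqp.symm
  · have : ¬ ((w₁ ++ w₂).length < w₁.length) := by simp
    simp only [this, if_false]
    rw [show (w₁ ++ w₂).length - w₁.length = w₂.length by simp, h2e]
  · intro j hj
    simp only [List.length_append] at hj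
    rcases Nat.lt_or_ge (j+1) w₁.length with hlt | hge
    · have hjl : j < w₁.length := by omega
      simp only [hlt, hjl, if_true]
      have := h1s j hjl
      rwa [List.getD_append _ _ _ _ hjl]
    · have hn1 : ¬ (j + 1 < w₁.length) := by omega
      simp only [hn1, if_false]
      rcases Nat.lt_or_ge j w₁.length with hjl | hjge
      · -- j + 1 = w₁.length
        have hje : j + 1 = w₁.length := by omega
        simp only [hjl, if_true]
        rw [show j + 1 - w₁.length = 0 by omega, h20, ← h1e, ← hje]
        have := h1s j hjl
        rwa [List.getD_append _ _ _ _ hjl]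
      · have hn2 : ¬ (j < w₁.length) := by omega
        simp only [hn2, if_false]
        have := h2s (j - w₁.length) (by omega)
        rw [show j - w₁.length + 1 = j + 1 - w₁.length by omega] at this
        rwa [List.getD_append_right _ _ _ _ hjge]
  · refine ⟨w₁.length, by simp, ?_⟩
    by_cases hl : w₁.length < w₁.length
    · omega
    · simp only [hl, if_false, Nat.sub_self, h20]
      exact hacc

/-- glue block runs into an accepting run. -/
lemma accepts_of_blocks {M : BuchiAutomaton A} {u' : ℕ → List A}
    (hu' : InfOftenNonempty u') (q : ℕ → M.Q)
    (hinit : q 0 ∈ M.init)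
    (hreach : ∀ i, Reaches M (q i) (u' i) (q (i+1)))
    (hrA : ∀ N, ∃ i, N ≤ i ∧ ReachesA M (q i) (u' i) (q (i+1))) :
    M.Accepts (omegaConcat u') := by
  classical
  set b : ℕ → ℕ := fun i => (prefixList u' i).length with hb
  have hbmono : Monotone b := prefixList_len_mono u'
  have hb0 : b 0 = 0 := by simp [hb]
  have hbsucc : ∀ i, b (i+1) = b i + (u' i).length := by
    intro i; simp [hb, prefixList_succ]
  have hσex : ∀ i, ∃ σ : ℕ → M.Q, σ 0 = q i ∧ σ (u' i).length = q (i+1) ∧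
      (∀ j, j < (u' i).length → σ (j+1) ∈ M.step (σ j) ((u' i).getD j default)) ∧
      (ReachesA M (q i) (u' i) (q (i+1)) → ∃ j, j ≤ (u' i).length ∧ σ j ∈ M.acc) := by
    intro i
    by_cases hA : ReachesA M (q i) (u' i) (q (i+1))
    · obtain ⟨σ, h0, he, hs, ha⟩ := run_of_reachesA hA
      exact ⟨σ, h0, he, hs, fun _ => ha⟩
    · obtain ⟨σ, h0, he, hs⟩ := run_of_reaches (hreach i)
      exact ⟨σ, h0, he, hs, fun h => absurd h hA⟩
  choose σ hσ0 hσe hσs hσa using hσex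
  choose idx hidx1 hidx2 using exists_block hu'
  set ρ' : ℕ → M.Q := fun n => σ (idx n) (n - b (idx n)) with hρ'
  have rho'_eval : ∀ i n, b i ≤ n → n < b (i+1) → ρ' n = σ i (n - b i) := by
    intro i n h1 h2
    have : idx n = i := block_unique (hidx1 n) (hidx2 n) h1 h2
    rw [hρ']; simp only []
    rw [this]
  have q_const : ∀ i j, i ≤ j → b i = b j → q i = q j := by
    intro i j hij
    induction j, hij using Nat.le_induction with
    | base => intro _; rfl
    | succ j hij ih =>
      intro hbe
      have h1 : b i ≤ b j := hbmono hij
      have h2 : b j ≤ b (j+1) := hbmono (by omega)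
      have hbj : b i = b j := by omega
      have hlen : (u' j).length = 0 := by
        have := hbsucc j; omega
      rw [ih hbj]
      rw [← hσ0 j, ← hσe j, hlen]
  have rho'_boundary : ∀ i, ρ' (b i) = q i := by
    intro i
    set j := idx (b i) with hj
    have hj1 : b j ≤ b i := hidx1 (b i)
    have hj2 : b i < b (j+1) := hidx2 (b i)
    have hij : i ≤ j := by
      by_contra hij
      have : j + 1 ≤ i := by omega
      have := hbmono this
      omega
    have hbe : b i = b j := le_antisymm (hbmono hij) hj1
    calc ρ' (b i) = σ j (b i - b j) := rfl
    _ = σ j 0 := by rw [show b i - b j = 0 by omega]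
    _ = q j := hσ0 j
    _ = q i := (q_const i j hij hbe).symm
  refine ⟨ρ', by rw [← hb0, rho'_boundary]; exact hinit, ?_, ?_⟩
  · intro n
    set i := idx n with hi
    have h1 : b i ≤ n := hidx1 n
    have h2 : n < b (i+1) := hidx2 n
    have hlen : n - b i < (u' i).length := by have := hbsucc i; omega
    have hx : omegaConcat u' n = (u' i).getD (n - b i) default :=
      omegaConcat_eval u' h1 h2
    have hstep := hσs i (n - b i) hlen
    have hρn : ρ' n = σ i (n - b i) := rho'_eval i n h1 h2
    rw [hx, hρn]
    rcases Nat.lt_or_ge (n+1) (b (i+1)) with hlt | hge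
    · rw [rho'_eval i (n+1) (by omega) hlt, show n + 1 - b i = (n - b i) + 1 by omega]
      exact hstep
    · have he : n + 1 = b (i+1) := by omega
      have : ρ' (n+1) = q (i+1) := by rw [he]; exact rho'_boundary (i+1)
      rw [this, ← hσe i, show (u' i).length = (n - b i) + 1 by have := hbsucc i; omega]
      exact hstep
  · intro n
    obtain ⟨k, hk⟩ := unbounded_of_ion hu' n
    obtain ⟨i, hik, hiA⟩ := hrA k
    obtain ⟨j, hjle, hjacc⟩ := hσa i hiA
    have hk' : n < b k := hk
    refine ⟨b i + j, ?_, ?_⟩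
    · have : b k ≤ b i := hbmono hik
      omega
    · rcases Nat.lt_or_ge j (u' i).length with hlt | hge
      · rw [rho'_eval i (b i + j) (by omega) (by rw [hbsucc]; omega),
          show b i + j - b i = j by omega]
        exact hjacc
      · have hje : j = (u' i).length := by omega
        have : b i + j = b (i+1) := by rw [hbsucc]; omega
        rw [this, rho'_boundary, ← hσe i, ← hje]
        exact hjacc

end RunLemmas
section Decompose
variable [Inhabited A]

lemma getD_take (l : List A) {k j : ℕ} (h : j < (l.take k).length) :
    (l.take k).getD j default = l.getD j default := by
  rw [List.getD_eq_getElem _ _ h, List.getD_eq_getElem _ _ (by simp at h; omega)]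
  simp

lemma getD_drop (l : List A) {k j : ℕ} (h : j < (l.drop k).length) :
    (l.drop k).getD j default = l.getD (k + j) default := by
  rw [List.getD_eq_getElem _ _ h, List.getD_eq_getElem _ _ (by simp at h; omega)]
  simp

lemma blocks_of_accepts {M : BuchiAutomaton A} {u : ℕ → List A}
    (hu : InfOftenNonempty u) (h : M.Accepts (omegaConcat u)) :
    ∃ q : ℕ → M.Q, q 0 ∈ M.init ∧ (∀ i, Reaches M (q i) (u i) (q (i+1))) ∧
      ∀ N, ∃ i, N ≤ i ∧ ReachesA M (q i) (u i) (q (i+1)) := by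
  obtain ⟨ρ, hinit, hstep, hio⟩ := h
  set b : ℕ → ℕ := fun i => (prefixList u i).length with hb
  have hbmono : Monotone b := prefixList_len_mono u
  have hb0 : b 0 = 0 := by simp [hb]
  have hbsucc : ∀ i, b (i+1) = b i + (u i).length := by
    intro i; simp [hb, prefixList_succ]
  refine ⟨fun i => ρ (b i), by simpa [hb0] using hinit, ?_, ?_⟩
  · intro i
    have hr := reaches_of_run ρ (u i) (b i) (fun j hj => by
      have h1 : b i ≤ b i + j := by omega
      have h2 : b i + j < b (i+1) := by rw [hbsucc]; omega
      have := hstep (b i + j)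
      rwa [omegaConcat_eval u h1 h2, show b i + j - b i = j by omega] at this)
    rwa [← hbsucc] at hr
  · intro N
    obtain ⟨m, hm, hmacc⟩ := hio (b N)
    obtain ⟨i, hi1, hi2⟩ := exists_block hu m
    have hi1' : b i ≤ m := hi1
    have hi2' : m < b (i+1) := hi2
    have hlen : m - b i < (u i).length := by have := hbsucc i; omega
    refine ⟨i, ?_, ?_⟩
    · by_contra hNi
      have : i + 1 ≤ N := by omega
      have := hbmono this
      omega
    · set w₁ := (u i).take (m - b i) with hw₁
      set w₂ := (u i).drop (m - b i) with hw₂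
      have hw₁len : w₁.length = m - b i := by
        rw [hw₁, List.length_take]; omega
      have hsplit : u i = w₁ ++ w₂ := (List.take_append_drop _ _).symm
      refine ⟨w₁, w₂, ρ m, hsplit, hmacc, ?_, ?_⟩
      · have hr := reaches_of_run ρ w₁ (b i) (fun j hj => by
          have h1 : b i ≤ b i + j := by omega
          have h2 : b i + j < b (i+1) := by rw [hbsucc]; rw [hw₁len] at hj; omega
          have := hstep (b i + j)
          rwa [omegaConcat_eval u h1 h2, show b i + j - b i = j by omega,
            ← getD_take (u i) (k := m - b i) (by rw [← hw₁]; exact hj), ← hw₁] at this)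
        rwa [show b i + w₁.length = m by omega] at hr
      · have hw₂len : w₂.length = (u i).length - (m - b i) := by
          rw [hw₂, List.length_drop]
        have hr := reaches_of_run ρ w₂ m (fun j hj => by
          have h1 : b i ≤ m + j := by omega
          have h2 : m + j < b (i+1) := by rw [hbsucc]; omega
          have := hstep (m + j)
          rwa [omegaConcat_eval u h1 h2,
            show m + j - b i = (m - b i) + j by omega,
            ← getD_drop (u i) (k := m - b i) (by rw [← hw₂]; exact hj), ← hw₂] at this)
        rwa [show m + w₂.length = b (i+1) by rw [hbsucc]; omega] at hr

/-- the key lemma: blockwise-equal profiles preserve acceptance. -/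
lemma accepts_iff_of_profiles {M : BuchiAutomaton A} {u u' : ℕ → List A}
    (hu : InfOftenNonempty u) (hu' : InfOftenNonempty u')
    (hp : ∀ i, Profile M (u i) = Profile M (u' i)) :
    M.Accepts (omegaConcat u) ↔ M.Accepts (omegaConcat u') := by
  have key : ∀ (v v' : ℕ → List A), InfOftenNonempty v → InfOftenNonempty v' →
      (∀ i, Profile M (v i) = Profile M (v' i)) →
      M.Accepts (omegaConcat v) → M.Accepts (omegaConcat v') := by
    intro v v' hv hv' hpv hacc
    obtain ⟨q, hinit, hreach, hrA⟩ := blocks_of_accepts hv hacc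
    refine accepts_of_blocks hv' q hinit
      (fun i => (Profile.reaches_iff (hpv i)).mp (hreach i)) (fun N => ?_)
    obtain ⟨i, hi, hiA⟩ := hrA N
    exact ⟨i, hi, (Profile.reachesA_iff (hpv i)).mp hiA⟩
  exact ⟨key u u' hu hu' hp, key u' u hu' hu (fun i => (hp i).symm)⟩

end Decompose
section Arnold
variable [Inhabited A]

lemma arnoldEq_refl (L : Set (ℕ → A)) (u : List A) : ArnoldEq L u u :=
  ⟨fun _ _ => Iff.rfl, fun _ _ _ => Iff.rfl⟩

lemma arnoldEq_symm {L : Set (ℕ → A)} {u u' : List A} (h : ArnoldEq L u u') : ArnoldEq L u' u :=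
  ⟨fun w x => (h.1 w x).symm, fun w v hv => (h.2 w v hv).symm⟩

lemma arnoldEq_trans {L : Set (ℕ → A)} {u u' u'' : List A}
    (h : ArnoldEq L u u') (h' : ArnoldEq L u' u'') : ArnoldEq L u u'' :=
  ⟨fun w x => (h.1 w x).trans (h'.1 w x), fun w v hv => (h.2 w v hv).trans (h'.2 w v hv)⟩

lemma arnold_concatCongr (L : Set (ℕ → A)) : ConcatCongr (ArnoldEq L) := by
  intro u₁ u₁' u₂ u₂' h1 h2
  constructor
  · intro w x
    have e1 : prepend w (prepend (u₁ ++ u₂) x) = prepend (w ++ u₁) (prepend u₂ x) := by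
      rw [prepend_append u₁, prepend_append w]
    have e3 : prepend w (prepend (u₁' ++ u₂') x) = prepend w (prepend u₁' (prepend u₂' x)) := by
      rw [prepend_append]
    rw [e1, e3]
    refine (h2.1 (w ++ u₁) x).trans ?_
    rw [prepend_append w u₁]
    exact h1.1 w (prepend u₂' x)
  · intro w v hv
    have hne1 : u₂ ++ v ≠ [] := fun hh => hv (List.append_eq_nil_iff.mp hh).2
    have hne2 : v ++ u₁' ≠ [] := fun hh => hv (List.append_eq_nil_iff.mp hh).1
    rw [List.append_assoc u₁ u₂ v, List.append_assoc u₁' u₂' v]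
    refine (h1.2 w (u₂ ++ v) hne1).trans ?_
    have r1 : prepend w (omegaPow (u₁' ++ (u₂ ++ v)))
        = prepend (w ++ u₁') (omegaPow (u₂ ++ (v ++ u₁'))) := by
      rw [omegaPow_rotate u₁' (u₂ ++ v), ← prepend_append, List.append_assoc]
    have r2 : prepend w (omegaPow (u₁' ++ (u₂' ++ v)))
        = prepend (w ++ u₁') (omegaPow (u₂' ++ (v ++ u₁'))) := by
      rw [omegaPow_rotate u₁' (u₂' ++ v), ← prepend_append, List.append_assoc]
    rw [r1, r2]
    exact h2.2 (w ++ u₁') (v ++ u₁') hne2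

lemma prepend_prepend_rep (w u : List A) (x : ℕ → A) :
    prepend w (prepend u x) = omegaConcat (seqCons w (seqCons u (fun k => [x k]))) := by
  rw [omegaConcat_seqCons w (ion_seqCons u (ion_singles x)),
    omegaConcat_seqCons u (ion_singles x), omegaConcat_singles]

lemma prepend_pow_rep (w : List A) {z : List A} (hz : z ≠ []) :
    prepend w (omegaPow z) = omegaConcat (seqCons w (fun _ => z)) := by
  rw [omegaConcat_seqCons w (ion_const hz), omegaPow_eq_omegaConcat_const hz]

lemma profile_refines_arnold {L : Set (ℕ → A)} {M : BuchiAutomaton A}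
    (hM : ∀ x, x ∈ L ↔ M.Accepts x) {u u' : List A}
    (hp : Profile M u = Profile M u') : ArnoldEq L u u' := by
  constructor
  · intro w x
    rw [hM, hM, prepend_prepend_rep, prepend_prepend_rep]
    apply accepts_iff_of_profiles (ion_seqCons _ (ion_seqCons _ (ion_singles x)))
      (ion_seqCons _ (ion_seqCons _ (ion_singles x)))
    intro i
    match i with
    | 0 => rfl
    | 1 => exact hp
    | (i+2) => rfl
  · intro w v hv
    have hz : u ++ v ≠ [] := fun hh => hv (List.append_eq_nil_iff.mp hh).2
    have hz' : u' ++ v ≠ [] := fun hh => hv (List.append_eq_nil_iff.mp hh).2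
    rw [hM, hM, prepend_pow_rep w hz, prepend_pow_rep w hz']
    apply accepts_iff_of_profiles (ion_seqCons _ (ion_const hz)) (ion_seqCons _ (ion_const hz'))
    intro i
    match i with
    | 0 => rfl
    | (i+1) => exact profile_append hp rfl

lemma arnold_finiteIndex {L : Set (ℕ → A)} {M : BuchiAutomaton A}
    (hM : ∀ x, x ∈ L ↔ M.Accepts x) : FiniteIndex (ArnoldEq L) := by
  classical
  haveI := M.finQ
  set cm : List A → Set (List A) := fun w => {v | ArnoldEq L w v} with hcm
  have class_eq : ∀ {w w' : List A}, ArnoldEq L w w' → cm w = cm w' := by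
    intro w w' h
    ext v
    exact ⟨fun hv => arnoldEq_trans (arnoldEq_symm h) hv, fun hv => arnoldEq_trans h hv⟩
  set F : (M.Q → M.Q → Prop × Prop) → Set (List A) := fun t =>
    if h : ∃ w : List A, Profile M w = t then cm h.choose else ∅ with hF
  have hfac : ∀ w, cm w = F (Profile M w) := by
    intro w
    have hex : ∃ w' : List A, Profile M w' = Profile M w := ⟨w, rfl⟩
    have : F (Profile M w) = cm hex.choose := by rw [hF]; exact dif_pos hex
    rw [this]
    exact (class_eq (profile_refines_arnold hM hex.choose_spec)).symm
  have hsub : (Set.range fun w => {v | ArnoldEq L w v}) ⊆ Set.range F := by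
    rintro s ⟨w, rfl⟩
    exact ⟨Profile M w, (hfac w).symm⟩
  exact (Set.finite_range F).subset hsub

end Arnold
section Ramsey

lemma infinite_ramsey_pairs {S : Type*} [Finite S] (c : ℕ → ℕ → S) :
    ∃ g : ℕ → ℕ, StrictMono g ∧ ∃ e : S, ∀ k l, k < l → c (g k) (g l) = e := by
  classical
  have hstep : ∀ X : {X : Set ℕ // X.Infinite},
      ∃ p : ℕ × {Y : Set ℕ // Y.Infinite}, p.1 ∈ X.1 ∧ p.2.1 ⊆ X.1 ∧
        (∀ y ∈ p.2.1, p.1 < y) ∧ ∃ s, ∀ y ∈ p.2.1, c p.1 y = s := by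
    rintro ⟨X, hX⟩
    obtain ⟨a, ha⟩ := hX.nonempty
    have hZ : (X \ Set.Iic a).Infinite := hX.diff (Set.finite_Iic a)
    have hcol : ∃ s, ((X \ Set.Iic a) ∩ {x | c a x = s}).Infinite := by
      by_contra hcon
      push_neg at hcon
      have hsub : (X \ Set.Iic a) ⊆ ⋃ s, ((X \ Set.Iic a) ∩ {x | c a x = s}) :=
        fun x hx => Set.mem_iUnion.mpr ⟨c a x, hx, rfl⟩
      exact hZ ((Set.finite_iUnion hcon).subset hsub)
    obtain ⟨s, hs⟩ := hcol
    refine ⟨⟨a, ⟨_, hs⟩⟩, ha, fun y hy => hy.1.1, fun y hy => ?_, s, fun y hy => hy.2⟩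
    have := hy.1.2
    simp only [Set.mem_Iic] at this
    omega
  choose f hf1 hf2 hf3 hf4 using hstep
  set F : ℕ → {X : Set ℕ // X.Infinite} :=
    fun n => Nat.rec ⟨Set.univ, Set.infinite_univ⟩ (fun _ X => (f X).2) n with hF
  set a : ℕ → ℕ := fun n => (f (F n)).1 with ha
  have hFsucc : ∀ n, F (n+1) = (f (F n)).2 := fun n => rfl
  have hFanti : ∀ n m, n ≤ m → (F m).1 ⊆ (F n).1 := by
    intro n m hnm
    induction m, hnm using Nat.le_induction with
    | base => exact subset_rfl
    | succ m hnm ih => exact subset_trans (by rw [hFsucc]; exact hf2 (F m)) ih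
  have hamem : ∀ n, a n ∈ (F n).1 := fun n => hf1 (F n)
  have hkey : ∀ n m, n < m → a m ∈ (F (n+1)).1 := by
    intro n m hnm
    exact hFanti (n+1) m (by omega) (hamem m)
  have hmono : StrictMono a := by
    apply strictMono_nat_of_lt_succ
    intro n
    have := hf3 (F n) (a (n+1)) (by rw [← hFsucc]; exact hkey n (n+1) (by omega))
    exact this
  choose d hd using fun n => hf4 (F n)
  have hcab : ∀ n m, n < m → c (a n) (a m) = d n := by
    intro n m hnm
    exact hd n (a m) (by rw [← hFsucc]; exact hkey n m hnm)
  obtain ⟨s, hsinf⟩ := Finite.exists_infinite_fiber d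
  have hsinf' : (setOf (fun n => d n = s)).Infinite := by
    rw [Set.infinite_coe_iff] at hsinf
    exact hsinf
  refine ⟨a ∘ Nat.nth (fun n => d n = s), hmono.comp (Nat.nth_strictMono hsinf'), s, ?_⟩
  intro k l hkl
  have h1 : Nat.nth (fun n => d n = s) k < Nat.nth (fun n => d n = s) l :=
    Nat.nth_strictMono hsinf' hkl
  have h2 : d (Nat.nth (fun n => d n = s) k) = s := Nat.nth_mem_of_infinite hsinf' k
  simp only [Function.comp_apply]
  rw [hcab _ _ h1, h2]

end Ramsey

section Seg
variable [Inhabited A]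

/-- the concatenation of the blocks `u a, …, u (b-1)`. -/
def seg (u : ℕ → List A) (a b : ℕ) : List A := prefixList (fun i => u (a + i)) (b - a)

lemma prefixList_eq_append_seg (u : ℕ → List A) {a b : ℕ} (hab : a ≤ b) :
    prefixList u b = prefixList u a ++ seg u a b := by
  rw [seg, ← prefixList_add, Nat.add_sub_cancel' hab]

lemma seg_append (u : ℕ → List A) {a b c : ℕ} (hab : a ≤ b) (hbc : b ≤ c) :
    seg u a b ++ seg u b c = seg u a c := by
  have h1 : prefixList u c = prefixList u a ++ seg u a c := prefixList_eq_append_seg u (hab.trans hbc)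
  have h2 : prefixList u c = prefixList u b ++ seg u b c := prefixList_eq_append_seg u hbc
  have h3 : prefixList u b = prefixList u a ++ seg u a b := prefixList_eq_append_seg u hab
  rw [h3, List.append_assoc] at h2
  rw [h2] at h1
  exact List.append_cancel_left h1

lemma seg_ne_nil {u : ℕ → List A} {a b j : ℕ} (h1 : a ≤ j) (h2 : j < b) (hne : u j ≠ []) :
    seg u a b ≠ [] := by
  intro hseg
  have : (prefixList (fun i => u (a + i)) (j - a + 1)).length
      ≤ (prefixList (fun i => u (a + i)) (b - a)).length :=
    prefixList_len_mono _ (by omega)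
  rw [seg] at hseg
  rw [hseg] at this
  rw [prefixList_succ] at this
  simp only [List.length_append, List.length_nil] at this
  have : (u (a + (j - a))).length = 0 := by omega
  rw [show a + (j - a) = j by omega] at this
  exact hne (List.length_eq_zero_iff.mp this)

lemma prefixList_regroup (u : ℕ → List A) {I : ℕ → ℕ} (hI : Monotone I) (m : ℕ) :
    prefixList u (I 0) ++ prefixList (fun k => seg u (I k) (I (k+1))) m = prefixList u (I m) := by
  induction m with
  | zero => simp
  | succ m ih =>
    rw [prefixList_succ, ← List.append_assoc, ih,
      ← prefixList_eq_append_seg u (hI (by omega : m ≤ m + 1))]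

/-- regrouping an infinite concatenation along a strictly monotone index sequence. -/
lemma omegaConcat_regroup {u : ℕ → List A} (hu : InfOftenNonempty u) {I : ℕ → ℕ}
    (hI : StrictMono I) :
    omegaConcat (seqCons (prefixList u (I 0)) (fun k => seg u (I k) (I (k+1)))) = omegaConcat u := by
  apply omegaConcat_congr
  intro n
  obtain ⟨m, hm⟩ := unbounded_of_ion hu n
  refine ⟨m + 1, I m, ?_, ?_⟩
  · rw [prefixList_seqCons, prefixList_regroup u hI.monotone]
    have : (prefixList u m).length ≤ (prefixList u (I m)).length :=
      prefixList_len_mono u (hI.le_apply)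
    omega
  · rw [prefixList_seqCons, prefixList_regroup u hI.monotone]

end Seg
section Recognize
variable [Inhabited A]

lemma arnold_pow_switch {L : Set (ℕ → A)} {W z z' : List A} (h : ArnoldEq L z z')
    (hz : z ≠ []) (hz' : z' ≠ []) :
    prepend W (omegaPow z) ∈ L ↔ prepend W (omegaPow z') ∈ L := by
  have e1 : prepend W (omegaPow z) = prepend W (omegaPow (z ++ z)) := by rw [omegaPow_sq]
  have e2 : prepend W (omegaPow (z' ++ z)) = prepend (W ++ z') (omegaPow (z ++ z')) := by
    rw [omegaPow_rotate z' z, ← prepend_append]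
  have e3 : prepend (W ++ z') (omegaPow (z' ++ z')) = prepend W (omegaPow z') := by
    rw [omegaPow_sq, prepend_append, prepend_omegaPow_self]
  rw [e1]
  refine (h.2 W z hz).trans ?_
  rw [e2]
  refine (h.2 (W ++ z') z' hz').trans ?_
  rw [e3]

lemma arnold_prefixList {L : Set (ℕ → A)} {u u' : ℕ → List A}
    (hrel : ∀ i, ArnoldEq L (u i) (u' i)) (m : ℕ) :
    ArnoldEq L (prefixList u m) (prefixList u' m) := by
  induction m with
  | zero => exact arnoldEq_refl L []
  | succ m ih =>
    rw [prefixList_succ, prefixList_succ]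
    exact arnold_concatCongr L _ _ _ _ ih (hrel m)

lemma arnold_seg {L : Set (ℕ → A)} {u u' : ℕ → List A}
    (hrel : ∀ i, ArnoldEq L (u i) (u' i)) (a b : ℕ) :
    ArnoldEq L (seg u a b) (seg u' a b) :=
  arnold_prefixList (fun i => hrel (a + i)) (b - a)

lemma arnold_recognizes {L : Set (ℕ → A)} {M : BuchiAutomaton A}
    (hM : ∀ x, x ∈ L ↔ M.Accepts x) : Recognizes (ArnoldEq L) L := by
  intro u u' hu hu' hrel
  haveI := M.finQ
  classical
  set c : ℕ → ℕ → ((M.Q → M.Q → Prop × Prop) × (M.Q → M.Q → Prop × Prop)) :=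
    fun i j => (Profile M (seg u i j), Profile M (seg u' i j)) with hc
  obtain ⟨g, hg, e, he⟩ := infinite_ramsey_pairs c
  have hthin : ∀ n : ℕ, ∃ m, n < m ∧ (∃ j, g n ≤ j ∧ j < g m ∧ u j ≠ []) ∧
      (∃ j, g n ≤ j ∧ j < g m ∧ u' j ≠ []) := by
    intro n
    obtain ⟨j, hj1, hj2⟩ := hu (g n)
    obtain ⟨j', hj1', hj2'⟩ := hu' (g n)
    have hgm : max j j' + n + 1 ≤ g (max j j' + n + 1) := hg.le_apply
    exact ⟨max j j' + n + 1, by omega, ⟨j, hj1, by omega, hj2⟩, ⟨j', hj1', by omega, hj2'⟩⟩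
  choose nxt hnxt1 hnxt2 hnxt3 using hthin
  set ψ : ℕ → ℕ := fun k => Nat.rec 0 (fun _ p => nxt p) k with hψ
  have hψsucc : ∀ k, ψ (k+1) = nxt (ψ k) := fun k => rfl
  have hψmono : StrictMono ψ :=
    strictMono_nat_of_lt_succ (fun k => by rw [hψsucc]; exact hnxt1 (ψ k))
  set I : ℕ → ℕ := fun k => g (ψ k) with hI
  have hImono : StrictMono I := hg.comp hψmono
  have hIc : ∀ k l, k < l → c (I k) (I l) = e := fun k l hkl => he (ψ k) (ψ l) (hψmono hkl)
  set Z : ℕ → List A := fun k => seg u (I k) (I (k+1)) with hZ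
  set Z' : ℕ → List A := fun k => seg u' (I k) (I (k+1)) with hZ'
  have hZprof : ∀ k, Profile M (Z k) = Profile M (Z 0) := by
    intro k
    have h1 := hIc k (k+1) (by omega)
    have h2 := hIc 0 1 (by omega)
    have := congrArg Prod.fst (h1.trans h2.symm)
    simpa [hc, hZ] using this
  have hZ'prof : ∀ k, Profile M (Z' k) = Profile M (Z' 0) := by
    intro k
    have h1 := hIc k (k+1) (by omega)
    have h2 := hIc 0 1 (by omega)
    have := congrArg Prod.snd (h1.trans h2.symm)
    simpa [hc, hZ'] using this
  have hZne : ∀ k, Z k ≠ [] := by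
    intro k
    obtain ⟨j, hj1, hj2, hj3⟩ := hnxt2 (ψ k)
    refine seg_ne_nil (a := I k) (b := I (k+1)) (j := j) hj1 ?_ hj3
    show j < g (ψ (k+1))
    rw [hψsucc]
    exact hj2
  have hZ'ne : ∀ k, Z' k ≠ [] := by
    intro k
    obtain ⟨j, hj1, hj2, hj3⟩ := hnxt3 (ψ k)
    refine seg_ne_nil (a := I k) (b := I (k+1)) (j := j) hj1 ?_ hj3
    show j < g (ψ (k+1))
    rw [hψsucc]
    exact hj2
  have hionZ : InfOftenNonempty Z := fun n => ⟨n, le_rfl, hZne n⟩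
  have hionZ' : InfOftenNonempty Z' := fun n => ⟨n, le_rfl, hZ'ne n⟩
  set W : List A := prefixList u (I 0) with hW
  set W' : List A := prefixList u' (I 0) with hW'
  have step1 : omegaConcat u ∈ L ↔ prepend W (omegaPow (Z 0)) ∈ L := by
    rw [hM, hM, ← omegaConcat_regroup hu hImono, prepend_pow_rep W (hZne 0)]
    exact accepts_iff_of_profiles (ion_seqCons _ hionZ) (ion_seqCons _ (ion_const (hZne 0)))
      (fun i => match i with | 0 => rfl | (i+1) => hZprof i)
  have step2 : omegaConcat u' ∈ L ↔ prepend W' (omegaPow (Z' 0)) ∈ L := by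
    rw [hM, hM, ← omegaConcat_regroup hu' hImono, prepend_pow_rep W' (hZ'ne 0)]
    exact accepts_iff_of_profiles (ion_seqCons _ hionZ') (ion_seqCons _ (ion_const (hZ'ne 0)))
      (fun i => match i with | 0 => rfl | (i+1) => hZ'prof i)
  have hWW' : ArnoldEq L W W' := arnold_prefixList hrel (I 0)
  have hZZ' : ArnoldEq L (Z 0) (Z' 0) := arnold_seg hrel (I 0) (I 1)
  have c1 : prepend W (omegaPow (Z 0)) ∈ L ↔ prepend W' (omegaPow (Z 0)) ∈ L := by
    have := hWW'.1 [] (omegaPow (Z 0))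
    simpa [prepend_nil] using this
  have c2 : prepend W' (omegaPow (Z 0)) ∈ L ↔ prepend W' (omegaPow (Z' 0)) ∈ L :=
    arnold_pow_switch hZZ' (hZne 0) (hZ'ne 0)
  exact step1.trans ((c1.trans (c2.trans step2.symm)))

end Recognize

/-- For an ω-regular language `L`, the Arnold congruence has finite index and is an
ω-congruence for `L`. -/
theorem statement18 [Inhabited A] (L : Set (ℕ → A)) (h : OmegaRegular L) :
    FiniteIndex (ArnoldEq L) ∧ ConcatCongr (ArnoldEq L) ∧ Recognizes (ArnoldEq L) L := by
  obtain ⟨M, hM⟩ := h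
  exact ⟨arnold_finiteIndex hM, arnold_concatCongr L, arnold_recognizes hM⟩
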